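/- Let (p_{ij}) be a stochastic-type matrix of nonnegative reals on a finite state space X, and let r₁, r₂, i', j' be distinct states with (1 − p_{r₁r₁}) > 0, (1 − p_{r₂r₂}) − p_{r₂r₁} p_{r₁r₂}/(1 − p_{r₁r₁}) > 0, and symmetrically (1 − p_{r₂r₂}) > 0, (1 − p_{r₁r₁}) − p_{r₁r₂} p_{r₂r₁}/(1 − p_{r₂r₂}) > 0. Define the one-step reduction _r p_{ij} = p_{ij} + p_{ir} p_{rj}/(1 − p_{rr}). Then the two-step reductions commute: reducing first by r₁ and then by r₂ gives the same transition probability from i' to j' as reducing first by r₂ and then by r₁; both equal p_{i'j'} + [p_{i'r₁} p_{r₁j'}(1 − p_{r₂r₂}) + p_{i'r₁} p_{r₁r₂} p_{r₂j'} + p_{i'r₂} p_{r₂j'}(1 − p_{r₁r₁}) + p_{i'r₂} p_{r₂r₁} p_{r₁j'}] / [(1 − p_{r₁r₁})(1 − p_{r₂r₂}) − p_{r₁r₂} p_{r₂r₁}]. -/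

import Mathlib

open Filter Topology

/-- The one-step state-reduction of a transition matrix excluding state `r`. -/
noncomputable def reduceStep {X : Type*} (p : X → X → ℝ) (r : X) : X → X → ℝ :=
  fun i j => p i j + p i r * p r j / (1 - p r r)

set_option maxHeartbeats 2000000 in
private lemma aux_alg (a b c d e f g h k : ℝ)
    (h1 : (1 - a) ≠ 0) (h2 : (1 - b) ≠ 0)
    (hA : 1 - (b + d * c / (1 - a)) ≠ 0)
    (hB : 1 - (a + c * d / (1 - b)) ≠ 0)
    (hD : (1 - a) * (1 - b) - c * d ≠ 0) :
    ((k + e * g / (1 - a)) + (f + e * c / (1 - a)) * (h + d * g / (1 - a)) /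
        (1 - (b + d * c / (1 - a))) =
      (k + f * h / (1 - b)) + (e + f * d / (1 - b)) * (g + c * h / (1 - b)) /
        (1 - (a + c * d / (1 - b)))) ∧
    ((k + e * g / (1 - a)) + (f + e * c / (1 - a)) * (h + d * g / (1 - a)) /
        (1 - (b + d * c / (1 - a))) =
      k + (e * g * (1 - b) + e * c * h + f * h * (1 - a) + f * d * g) /
        ((1 - a) * (1 - b) - c * d)) := by
  have hA' : (1 - a) * (1 - b) - d * c ≠ 0 := by
    intro hz; apply hA; field_simp; linarith [hz]
  have hB' : (1 - b) * (1 - a) - c * d ≠ 0 := by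
    intro hz; apply hB; field_simp; linarith [hz]
  have e1 : 1 - (b + d * c / (1 - a)) = ((1 - a) * (1 - b) - d * c) / (1 - a) := by
    field_simp; ring
  have e2 : 1 - (a + c * d / (1 - b)) = ((1 - b) * (1 - a) - c * d) / (1 - b) := by
    field_simp; ring
  rw [e1, e2, div_div_eq_mul_div, div_div_eq_mul_div]
  constructor <;> · field_simp; ring

/-- the two-step state reductions excluding `r₁` then `r₂`, and excluding
`r₂` then `r₁`, commute, and both equal the stated symmetric closed form. -/
theorem reduceStep_comm (X : Type*) [DecidableEq X]
    (p : X → X → ℝ) (hnn : ∀ i j, 0 ≤ p i j)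
    (r₁ r₂ i' j' : X)
    (h12 : r₁ ≠ r₂) (hi1 : i' ≠ r₁) (hi2 : i' ≠ r₂) (hj1 : j' ≠ r₁) (hj2 : j' ≠ r₂)
    (hij : i' ≠ j')
    (hd1 : 0 < 1 - p r₁ r₁)
    (hd2 : 0 < (1 - p r₂ r₂) - p r₂ r₁ * p r₁ r₂ / (1 - p r₁ r₁))
    (hd1' : 0 < 1 - p r₂ r₂)
    (hd2' : 0 < (1 - p r₁ r₁) - p r₁ r₂ * p r₂ r₁ / (1 - p r₂ r₂)) :
    reduceStep (reduceStep p r₁) r₂ i' j' = reduceStep (reduceStep p r₂) r₁ i' j' ∧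
    reduceStep (reduceStep p r₁) r₂ i' j' =
      p i' j' +
        (p i' r₁ * p r₁ j' * (1 - p r₂ r₂) + p i' r₁ * p r₁ r₂ * p r₂ j'
          + p i' r₂ * p r₂ j' * (1 - p r₁ r₁) + p i' r₂ * p r₂ r₁ * p r₁ j')
        / ((1 - p r₁ r₁) * (1 - p r₂ r₂) - p r₁ r₂ * p r₂ r₁) := by
  have h1 : (1 - p r₁ r₁) ≠ 0 := ne_of_gt hd1
  have h2 : (1 - p r₂ r₂) ≠ 0 := ne_of_gt hd1'
  have hA : 1 - (p r₂ r₂ + p r₂ r₁ * p r₁ r₂ / (1 - p r₁ r₁)) ≠ 0 := by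
    have : 1 - (p r₂ r₂ + p r₂ r₁ * p r₁ r₂ / (1 - p r₁ r₁))
        = (1 - p r₂ r₂) - p r₂ r₁ * p r₁ r₂ / (1 - p r₁ r₁) := by ring
    rw [this]; exact ne_of_gt hd2
  have hB : 1 - (p r₁ r₁ + p r₁ r₂ * p r₂ r₁ / (1 - p r₂ r₂)) ≠ 0 := by
    have : 1 - (p r₁ r₁ + p r₁ r₂ * p r₂ r₁ / (1 - p r₂ r₂))
        = (1 - p r₁ r₁) - p r₁ r₂ * p r₂ r₁ / (1 - p r₂ r₂) := by ring
    rw [this]; exact ne_of_gt hd2'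
  have hD : (1 - p r₁ r₁) * (1 - p r₂ r₂) - p r₁ r₂ * p r₂ r₁ ≠ 0 := by
    have hpos := mul_pos hd1 hd2
    have heq : (1 - p r₁ r₁) * ((1 - p r₂ r₂) - p r₂ r₁ * p r₁ r₂ / (1 - p r₁ r₁))
        = (1 - p r₁ r₁) * (1 - p r₂ r₂) - p r₁ r₂ * p r₂ r₁ := by
      field_simp
    rw [heq] at hpos
    exact ne_of_gt hpos
  simpa only [reduceStep] using
    aux_alg (p r₁ r₁) (p r₂ r₂) (p r₁ r₂) (p r₂ r₁)
      (p i' r₁) (p i' r₂) (p r₁ j') (p r₂ j') (p i' j') h1 h2 hA hB hD
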